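/- Let G be a finite simple graph on n vertices, let e = {u,v} be an edge of G, and let 1 ≤ k ≤ n. Then t_k(G) = t_k(G−e) − t_k(GΔe), where on the right-hand side t_k is computed in the graphs G−e (on n vertices) and GΔe (on n−1 vertices) respectively. -/

import Mathlib

open scoped Classical

noncomputable section

/-- Number of connected components of the spanning subgraph with edge set `A`. -/
def numComp {V : Type*} (A : Finset (Sym2 V)) : ℕ :=
  Nat.card (SimpleGraph.fromEdgeSet (↑A : Set (Sym2 V))).ConnectedComponent

/-- `t_k(G) = 2^{-(n-k)} ∑_{A ⊆ E, k(A) = k} (-2)^{|A|}`, where `n = |V|`. -/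
def tcoef {V : Type*} [Fintype V] (G : SimpleGraph V) (k : ℕ) : ℚ :=
  (2 : ℚ) ^ ((k : ℤ) - (Fintype.card V : ℤ)) *
    ∑ A ∈ G.edgeFinset.powerset.filter (fun A => numComp A = k), (-2 : ℚ) ^ A.card

/-- `GΔe`: delete `u,v`, add a new vertex `w` (the `none` vertex) adjacent to exactly
those vertices adjacent in `G` to exactly one of `u` and `v`. -/
def symmDiffContract {V : Type*} (G : SimpleGraph V) (u v : V) :
    SimpleGraph (Option {z : V // z ≠ u ∧ z ≠ v}) :=
  SimpleGraph.fromRel (fun a b =>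
    match a, b with
    | some a, some b => G.Adj a.1 b.1
    | some a, none => Xor' (G.Adj u a.1) (G.Adj v a.1)
    | none, some b => Xor' (G.Adj u b.1) (G.Adj v b.1)
    | none, none => False)

namespace TK

variable {W : Type*}

/-- all edges of `A` are monochromatic under `σ` -/
def MonoAll {α : Type*} (σ : W → α) (A : Finset (Sym2 W)) : Prop :=
  ∀ e ∈ A, ∀ a ∈ e, ∀ b ∈ e, σ a = σ b

lemma walk_const {α : Type*} (H : SimpleGraph W) (σ : W → α)
    (h : ∀ a b, H.Adj a b → σ a = σ b) {x y : W} (p : H.Walk x y) : σ x = σ y := by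
  induction p with
  | nil => rfl
  | cons h' p ih => exact (h _ _ h').trans ih

def compEquiv {α : Type*} (A : Finset (Sym2 W)) :
    {σ : W → α // MonoAll σ A} ≃
      ((SimpleGraph.fromEdgeSet (↑A : Set (Sym2 W))).ConnectedComponent → α) where
  toFun σ := SimpleGraph.ConnectedComponent.lift σ.1 (by
    intro x y p _
    refine walk_const _ _ (fun a b hab => ?_) p
    rw [SimpleGraph.fromEdgeSet_adj] at hab
    exact σ.2 _ hab.1 a (Sym2.mem_mk_left a b) b (Sym2.mem_mk_right a b))
  invFun f := ⟨fun z => f ((SimpleGraph.fromEdgeSet (↑A : Set (Sym2 W))).connectedComponentMk z),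
    by
      intro e he a ha b hb
      by_cases hab : a = b
      · rw [hab]
      · refine congrArg f (SimpleGraph.ConnectedComponent.sound (SimpleGraph.Adj.reachable ?_))
        rw [SimpleGraph.fromEdgeSet_adj]
        refine ⟨?_, hab⟩
        have : e = s(a, b) := by
          induction e with
          | _ x y =>
            rw [Sym2.mem_iff] at ha hb
            rcases ha with rfl | rfl <;> rcases hb with rfl | rfl
            · exact absurd rfl hab
            · rfl
            · exact Sym2.eq_swap
            · exact absurd rfl hab
        rw [← this]; exact_mod_cast he⟩
  left_inv σ := by ext z; simp
  right_inv f := by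
    ext c
    induction c using SimpleGraph.ConnectedComponent.ind
    simp

lemma count_lemma [Fintype W] (A : Finset (Sym2 W)) (q : ℕ) :
    ∑ σ : W → Fin q, (if MonoAll σ A then (1 : ℚ) else 0) = (q : ℚ) ^ numComp A := by
  rw [Finset.sum_boole]
  norm_cast
  rw [← Fintype.card_subtype]
  rw [← Nat.card_eq_fintype_card, Nat.card_congr (compEquiv A), Nat.card_fun]
  simp [numComp]

/-- mono predicate for a single edge -/
def Mono {α : Type*} (σ : W → α) (e : Sym2 W) : Prop := ∀ a ∈ e, ∀ b ∈ e, σ a = σ b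

lemma mono_pair {α : Type*} {σ : W → α} {a b : W} : Mono σ s(a, b) ↔ σ a = σ b := by
  constructor
  · intro h; exact h a (Sym2.mem_mk_left a b) b (Sym2.mem_mk_right a b)
  · intro h x hx y hy
    rw [Sym2.mem_iff] at hx hy
    rcases hx with rfl | rfl <;> rcases hy with rfl | rfl
    exacts [rfl, h, h.symm, rfl]

def wW {α : Type*} (σ : W → α) (e : Sym2 W) : ℚ := if Mono σ e then -1 else 1

lemma wW_pair {α : Type*} (σ : W → α) (a b : W) :
    wW σ s(a, b) = if σ a = σ b then -1 else 1 := by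
  rw [wW, if_congr mono_pair rfl rfl]

def dW {α : Type*} (σ : W → α) (e : Sym2 W) : ℚ := if Mono σ e then -2 else 0

def ener {α : Type*} (H : SimpleGraph W) [Fintype H.edgeSet] (σ : W → α) : ℚ :=
  ∏ e ∈ H.edgeFinset, wW σ e

lemma prod_dW {α : Type*} (σ : W → α) (A : Finset (Sym2 W)) :
    ∏ e ∈ A, dW σ e = if MonoAll σ A then (-2 : ℚ) ^ A.card else 0 := by
  by_cases h : MonoAll σ A
  · rw [if_pos h, ← Finset.prod_const]
    exact Finset.prod_congr rfl fun e heA => by rw [dW, if_pos (show Mono σ e from h e heA)]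
  · rw [if_neg h]
    rw [MonoAll] at h; push_neg at h
    obtain ⟨e, he, a, ha, b, hb, hab⟩ := h
    refine Finset.prod_eq_zero he ?_
    rw [dW, if_neg]
    intro hm; exact hab (hm a ha b hb)

lemma whitney [Fintype W] (H : SimpleGraph W) (q : ℕ) :
    ∑ σ : W → Fin q, ener H σ =
      ∑ A ∈ H.edgeFinset.powerset, (-2 : ℚ) ^ A.card * (q : ℚ) ^ numComp A := by
  have h1 : ∀ σ : W → Fin q, ener H σ = ∑ A ∈ H.edgeFinset.powerset, ∏ e ∈ A, dW σ e := by
    intro σ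
    have : ener H σ = ∏ e ∈ H.edgeFinset, (dW σ e + 1) := by
      refine Finset.prod_congr rfl fun e _ => ?_
      rw [wW, dW]; split_ifs <;> norm_num
    rw [this, Finset.prod_add]
    simp
  simp_rw [h1, prod_dW]
  rw [Finset.sum_comm]
  refine Finset.sum_congr rfl fun A _ => ?_
  rw [← count_lemma A q, Finset.mul_sum]
  refine Finset.sum_congr rfl fun σ _ => ?_
  split_ifs <;> ring

def gpoly [Fintype W] (H : SimpleGraph W) : Polynomial ℚ :=
  ∑ A ∈ H.edgeFinset.powerset, Polynomial.C ((-2 : ℚ) ^ A.card) * Polynomial.X ^ numComp A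

lemma gpoly_eval [Fintype W] (H : SimpleGraph W) (q : ℕ) :
    (gpoly H).eval (q : ℚ) = ∑ σ : W → Fin q, ener H σ := by
  rw [whitney, gpoly, Polynomial.eval_finset_sum]
  simp

lemma gpoly_coeff [Fintype W] (H : SimpleGraph W) (k : ℕ) :
    (gpoly H).coeff k =
      ∑ A ∈ H.edgeFinset.powerset.filter (fun A => numComp A = k), (-2 : ℚ) ^ A.card := by
  rw [gpoly, Polynomial.finset_sum_coeff, Finset.sum_filter]
  refine Finset.sum_congr rfl fun A _ => ?_
  rw [Polynomial.coeff_C_mul, Polynomial.coeff_X_pow]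
  by_cases h : numComp A = k
  · simp [h]
  · rw [if_neg h, if_neg (fun hh => h hh.symm)]
    simp

section Contract
variable {V : Type*} (G : SimpleGraph V) (u v : V)

/-- extension of a coloring of `GΔe`'s vertices to `V` -/
def extc {α : Type*} (τ : Option {z : V // z ≠ u ∧ z ≠ v} → α) : V → α :=
  fun z => if h : z ≠ u ∧ z ≠ v then τ (some ⟨z, h⟩) else τ none

variable {G u v}

lemma extc_spec {α : Type*} (τ : Option {z : V // z ≠ u ∧ z ≠ v} → α)
    (y : {z : V // z ≠ u ∧ z ≠ v}) : extc u v τ y.1 = τ (some y) := by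
  rw [extc, dif_pos y.2]

lemma extc_u {α : Type*} (τ : Option {z : V // z ≠ u ∧ z ≠ v} → α) :
    extc u v τ u = τ none := by
  rw [extc, dif_neg (by simp)]

lemma extc_v {α : Type*} (τ : Option {z : V // z ≠ u ∧ z ≠ v} → α) :
    extc u v τ v = τ none := by
  rw [extc, dif_neg (by simp)]

lemma contract_adj_some {a b : {z : V // z ≠ u ∧ z ≠ v}} :
    (symmDiffContract G u v).Adj (some a) (some b) ↔ G.Adj a.1 b.1 := by
  constructor
  · rintro ⟨hne, h | h⟩
    · exact h
    · exact h.symm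
  · intro h
    exact ⟨by simpa [Option.some_inj, Subtype.ext_iff] using h.ne, Or.inl h⟩

lemma contract_adj_none {b : {z : V // z ≠ u ∧ z ≠ v}} :
    (symmDiffContract G u v).Adj none (some b) ↔ Xor' (G.Adj u b.1) (G.Adj v b.1) := by
  constructor
  · rintro ⟨hne, h | h⟩
    · exact h
    · exact h
  · intro h
    exact ⟨by simp, Or.inl h⟩

lemma contract_not_adj_none_none : ¬ (symmDiffContract G u v).Adj none none :=
  fun h => h.ne rfl

end Contract

section Contract2
variable {V : Type*} [Fintype V] {G : SimpleGraph V} {u v : V}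

lemma ener_contract (he : G.Adj u v) {α : Type*}
    (τ : Option {z : V // z ≠ u ∧ z ≠ v} → α) :
    ener (G.deleteEdges {s(u, v)}) (extc u v τ) = ener (symmDiffContract G u v) τ := by
  classical
  set σ := extc u v τ with hσ
  set E' := (G.deleteEdges {s(u, v)}).edgeFinset with hE'
  set F := (symmDiffContract G u v).edgeFinset with hF
  have hδinj : Function.Injective
      (fun x : Option {z : V // z ≠ u ∧ z ≠ v} => x.elim u Subtype.val) := by
    rintro (_ | a) (_ | b) h
    · rfl
    · exact absurd h.symm b.2.1
    · exact absurd h a.2.1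
    · exact congrArg some (Subtype.ext h)
  simp only [ener]
  rw [← Finset.prod_filter_mul_prod_filter_not E' (fun e => u ∈ e ∨ v ∈ e) (wW σ),
    ← Finset.prod_filter_mul_prod_filter_not F (fun f => none ∈ f) (wW τ)]
  set cB : {z : V // z ≠ u ∧ z ≠ v} → ℚ :=
    fun y => if τ none = τ (some y) then -1 else 1 with hcB
  congr 1
  · -- incident part
    have hNu : ∏ e ∈ E'.filter (fun e => u ∈ e), wW σ e
        = ∏ y ∈ Finset.univ.filter (fun y => G.Adj u y.1), cB y := by
      refine (Finset.prod_nbij (fun y => s(u, y.1)) ?_ ?_ ?_ ?_).symm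
      · intro y hy
        rw [Finset.mem_filter] at hy ⊢
        refine ⟨?_, Sym2.mem_mk_left _ _⟩
        rw [hE', SimpleGraph.mem_edgeFinset, SimpleGraph.mem_edgeSet,
          SimpleGraph.deleteEdges_adj]
        refine ⟨hy.2, ?_⟩
        rw [Set.mem_singleton_iff, Sym2.congr_right]
        exact y.2.2
      · intro y1 _ y2 _ h
        exact Subtype.ext (Sym2.congr_right.mp h)
      · intro e het
        rw [Finset.mem_coe, Finset.mem_filter] at het
        obtain ⟨z, rfl⟩ := Sym2.mem_iff_exists.mp het.2
        have h1 := het.1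
        rw [hE', SimpleGraph.mem_edgeFinset, SimpleGraph.mem_edgeSet,
          SimpleGraph.deleteEdges_adj] at h1
        have hzv : z ≠ v := by
          intro hzv
          exact h1.2 (by rw [hzv]; exact Set.mem_singleton _)
        refine ⟨⟨z, h1.1.ne', hzv⟩, ?_, rfl⟩
        rw [Finset.mem_coe, Finset.mem_filter]
        exact ⟨Finset.mem_univ _, h1.1⟩
      · intro y _
        rw [wW_pair, hcB, hσ, extc_u, extc_spec]
    have hNv : ∏ e ∈ E'.filter (fun e => v ∈ e ∧ u ∉ e), wW σ e
        = ∏ y ∈ Finset.univ.filter (fun y => G.Adj v y.1), cB y := by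
      refine (Finset.prod_nbij (fun y => s(v, y.1)) ?_ ?_ ?_ ?_).symm
      · intro y hy
        rw [Finset.mem_filter] at hy ⊢
        refine ⟨?_, Sym2.mem_mk_left _ _, ?_⟩
        · rw [hE', SimpleGraph.mem_edgeFinset, SimpleGraph.mem_edgeSet,
            SimpleGraph.deleteEdges_adj]
          refine ⟨hy.2, ?_⟩
          rw [Set.mem_singleton_iff, Sym2.eq_iff]
          rintro (⟨hvu, -⟩ | ⟨-, hyu⟩)
          · exact he.ne' hvu
          · exact y.2.1 hyu
        · rw [Sym2.mem_iff]
          rintro (huv | huy)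
          · exact he.ne huv
          · exact y.2.1 huy.symm
      · intro y1 _ y2 _ h
        exact Subtype.ext (Sym2.congr_right.mp h)
      · intro e het
        rw [Finset.mem_coe, Finset.mem_filter] at het
        obtain ⟨z, rfl⟩ := Sym2.mem_iff_exists.mp het.2.1
        have h1 := het.1
        rw [hE', SimpleGraph.mem_edgeFinset, SimpleGraph.mem_edgeSet,
          SimpleGraph.deleteEdges_adj] at h1
        have hzu : z ≠ u := by
          intro hzu
          exact het.2.2 (by rw [hzu]; exact Sym2.mem_mk_right _ _)
        refine ⟨⟨z, hzu, h1.1.ne'⟩, ?_, rfl⟩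
        rw [Finset.mem_coe, Finset.mem_filter]
        exact ⟨Finset.mem_univ _, h1.1⟩
      · intro y _
        rw [wW_pair, hcB, hσ, extc_v, extc_spec]
    have hRHS : ∏ f ∈ F.filter (fun f => none ∈ f), wW τ f
        = ∏ y ∈ Finset.univ.filter
            (fun y => Xor' (G.Adj u y.1) (G.Adj v y.1)), cB y := by
      refine (Finset.prod_nbij (fun y => s(none, some y)) ?_ ?_ ?_ ?_).symm
      · intro y hy
        rw [Finset.mem_filter] at hy ⊢
        refine ⟨?_, Sym2.mem_mk_left _ _⟩
        rw [hF, SimpleGraph.mem_edgeFinset, SimpleGraph.mem_edgeSet]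
        exact contract_adj_none.mpr hy.2
      · intro y1 _ y2 _ h
        exact Option.some_injective _ (Sym2.congr_right.mp h)
      · intro f hft
        rw [Finset.mem_coe, Finset.mem_filter] at hft
        obtain ⟨x, rfl⟩ := Sym2.mem_iff_exists.mp hft.2
        have h1 := hft.1
        rw [hF, SimpleGraph.mem_edgeFinset, SimpleGraph.mem_edgeSet] at h1
        match x with
        | none => exact absurd h1 contract_not_adj_none_none
        | some b =>
          refine ⟨b, ?_, rfl⟩
          rw [Finset.mem_coe, Finset.mem_filter]
          exact ⟨Finset.mem_univ _, contract_adj_none.mp h1⟩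
      · intro y _
        rw [wW_pair, hcB]
    have hsplit : ∏ e ∈ E'.filter (fun e => u ∈ e ∨ v ∈ e), wW σ e
        = (∏ e ∈ E'.filter (fun e => u ∈ e), wW σ e) *
          ∏ e ∈ E'.filter (fun e => v ∈ e ∧ u ∉ e), wW σ e := by
      rw [← Finset.prod_filter_mul_prod_filter_not
        (E'.filter (fun e => u ∈ e ∨ v ∈ e)) (fun e => u ∈ e) (wW σ),
        Finset.filter_filter, Finset.filter_filter]
      congr 1
      · exact Finset.prod_congr (Finset.filter_congr (fun e _ => by tauto))
          (fun _ _ => rfl)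
      · exact Finset.prod_congr (Finset.filter_congr (fun e _ => by tauto))
          (fun _ _ => rfl)
    rw [hsplit, hNu, hNv, hRHS, Finset.prod_filter, Finset.prod_filter,
      Finset.prod_filter, ← Finset.prod_mul_distrib]
    refine Finset.prod_congr rfl fun y _ => ?_
    have hcc : cB y * cB y = 1 := by
      by_cases h : τ none = τ (some y) <;> simp [hcB, h]
    by_cases hA : G.Adj u y.1 <;> by_cases hB : G.Adj v y.1 <;>
      simp [hA, hB, Xor', hcc]
  · -- nonincident part
    refine (Finset.prod_nbij
      (Sym2.map (fun x : Option {z : V // z ≠ u ∧ z ≠ v} => x.elim u Subtype.val))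
      ?_ ?_ ?_ ?_).symm
    · intro f hf
      rw [Finset.mem_filter] at hf
      induction f using Sym2.ind with
      | _ x y =>
        match x, y with
        | none, _ => exact absurd (Sym2.mem_mk_left _ _) hf.2
        | some a, none => exact absurd (Sym2.mem_mk_right _ _) hf.2
        | some a, some b =>
          have hadj : G.Adj a.1 b.1 := by
            have := hf.1
            rw [hF, SimpleGraph.mem_edgeFinset, SimpleGraph.mem_edgeSet] at this
            exact contract_adj_some.mp this
          rw [Sym2.map_pair_eq, Finset.mem_filter]
          constructor
          · rw [hE', SimpleGraph.mem_edgeFinset, SimpleGraph.mem_edgeSet,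
              SimpleGraph.deleteEdges_adj]
            refine ⟨hadj, ?_⟩
            rw [Set.mem_singleton_iff, Sym2.eq_iff]
            rintro (⟨hau, -⟩ | ⟨-, hbu⟩)
            · exact a.2.1 hau
            · exact b.2.1 hbu
          · rw [Sym2.mem_iff, Sym2.mem_iff]
            push_neg
            exact ⟨⟨fun h => a.2.1 h.symm, fun h => b.2.1 h.symm⟩,
              fun h => a.2.2 h.symm, fun h => b.2.2 h.symm⟩
    · exact (Sym2.map.injective hδinj).injOn
    · intro e het
      rw [Finset.mem_coe, Finset.mem_filter] at het
      induction e using Sym2.ind with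
      | _ x y =>
        have hx : x ≠ u ∧ x ≠ v := by
          constructor <;> intro h <;> apply het.2
          · exact Or.inl (h ▸ Sym2.mem_mk_left _ _)
          · exact Or.inr (h ▸ Sym2.mem_mk_left _ _)
        have hy : y ≠ u ∧ y ≠ v := by
          constructor <;> intro h <;> apply het.2
          · exact Or.inl (h ▸ Sym2.mem_mk_right _ _)
          · exact Or.inr (h ▸ Sym2.mem_mk_right _ _)
        have hadj : G.Adj x y := by
          have h1 := het.1
          rw [hE', SimpleGraph.mem_edgeFinset, SimpleGraph.mem_edgeSet,
            SimpleGraph.deleteEdges_adj] at h1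
          exact h1.1
        refine ⟨s(some ⟨x, hx⟩, some ⟨y, hy⟩), ?_, rfl⟩
        rw [Finset.mem_coe, Finset.mem_filter]
        constructor
        · rw [hF, SimpleGraph.mem_edgeFinset, SimpleGraph.mem_edgeSet]
          exact contract_adj_some.mpr hadj
        · rw [Sym2.mem_iff]
          push_neg
          exact ⟨fun h => (nomatch h), fun h => (nomatch h)⟩
    · intro f hf
      rw [Finset.mem_filter] at hf
      induction f using Sym2.ind with
      | _ x y =>
        match x, y with
        | none, _ => exact absurd (Sym2.mem_mk_left _ _) hf.2
        | some a, none => exact absurd (Sym2.mem_mk_right _ _) hf.2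
        | some a, some b =>
          rw [Sym2.map_pair_eq, wW_pair, wW_pair, hσ]
          simp only [Option.elim]
          simp only [extc_spec]

lemma edgeFinset_delete_eq (he : G.Adj u v) :
    (G.deleteEdges {s(u, v)}).edgeFinset = G.edgeFinset.erase s(u, v) := by
  ext e
  rw [SimpleGraph.mem_edgeFinset, Finset.mem_erase, SimpleGraph.mem_edgeFinset,
    SimpleGraph.edgeSet_deleteEdges, Set.mem_diff, Set.mem_singleton_iff, and_comm]

lemma sum_ener_rec (he : G.Adj u v) (q : ℕ) :
    ∑ σ : V → Fin q, ener G σ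
      = ∑ σ : V → Fin q, ener (G.deleteEdges {s(u, v)}) σ
        - 2 * ∑ τ : Option {z : V // z ≠ u ∧ z ≠ v} → Fin q,
            ener (symmDiffContract G u v) τ := by
  classical
  have hnotmem : s(u, v) ∉ (G.deleteEdges {s(u, v)}).edgeFinset := by
    rw [edgeFinset_delete_eq he]
    exact Finset.notMem_erase _ _
  have hins : G.edgeFinset = insert s(u, v) (G.deleteEdges {s(u, v)}).edgeFinset := by
    rw [edgeFinset_delete_eq he, Finset.insert_erase]
    rw [SimpleGraph.mem_edgeFinset, SimpleGraph.mem_edgeSet]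
    exact he
  have h1 : ∀ σ : V → Fin q, ener G σ
      = ener (G.deleteEdges {s(u, v)}) σ
        + (if σ u = σ v then (-2 : ℚ) else 0) * ener (G.deleteEdges {s(u, v)}) σ := by
    intro σ
    rw [ener, hins, Finset.prod_insert hnotmem, wW_pair, ← ener]
    split_ifs <;> ring
  rw [Finset.sum_congr rfl (fun σ _ => h1 σ), Finset.sum_add_distrib]
  have h2 : ∑ σ : V → Fin q,
      (if σ u = σ v then (-2 : ℚ) else 0) * ener (G.deleteEdges {s(u, v)}) σ
      = -2 * ∑ σ ∈ Finset.univ.filter (fun σ : V → Fin q => σ u = σ v),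
          ener (G.deleteEdges {s(u, v)}) σ := by
    rw [Finset.sum_filter, Finset.mul_sum]
    refine Finset.sum_congr rfl fun σ _ => ?_
    split_ifs <;> ring
  have h3 : ∑ σ ∈ Finset.univ.filter (fun σ : V → Fin q => σ u = σ v),
      ener (G.deleteEdges {s(u, v)}) σ
      = ∑ τ : Option {z : V // z ≠ u ∧ z ≠ v} → Fin q,
          ener (symmDiffContract G u v) τ := by
    refine (Finset.sum_nbij (extc u v) ?_ ?_ ?_ ?_).symm
    · intro τ _
      rw [Finset.mem_filter]
      exact ⟨Finset.mem_univ _, by rw [extc_u, extc_v]⟩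
    · intro τ1 _ τ2 _ h
      funext x
      match x with
      | none =>
        have := congrFun h u
        rwa [extc_u, extc_u] at this
      | some y =>
        have := congrFun h y.1
        rwa [extc_spec, extc_spec] at this
    · intro σ hσm
      rw [Finset.mem_coe, Finset.mem_filter] at hσm
      refine ⟨fun x => x.elim (σ u) (fun z => σ z.1), Finset.mem_coe.mpr (Finset.mem_univ _), ?_⟩
      funext z
      by_cases h : z ≠ u ∧ z ≠ v
      · exact extc_spec _ ⟨z, h⟩
      · push_neg at h
        by_cases hzu : z = u
        · rw [hzu]; exact extc_u _
        · rw [h hzu]; exact (extc_v _).trans hσm.2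
    · intro τ _
      exact (ener_contract he τ).symm
  rw [h2, h3]
  ring

lemma gpoly_rec (he : G.Adj u v) :
    gpoly G = gpoly (G.deleteEdges {s(u, v)})
      - Polynomial.C 2 * gpoly (symmDiffContract G u v) := by
  apply Polynomial.eq_of_infinite_eval_eq
  apply Set.infinite_of_injective_forall_mem (f := (Nat.cast : ℕ → ℚ))
    (hi := Nat.cast_injective)
  intro q
  simp only [Set.mem_setOf_eq, Polynomial.eval_sub, Polynomial.eval_mul, Polynomial.eval_C]
  rw [gpoly_eval, gpoly_eval, gpoly_eval, sum_ener_rec he q]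
  congr!

end Contract2
end TK

theorem tcoef_recursion {V : Type*} [Fintype V] (G : SimpleGraph V) (u v : V)
    (he : G.Adj u v) (k : ℕ) (hk1 : 1 ≤ k) (hkn : k ≤ Fintype.card V) :
    tcoef G k = tcoef (G.deleteEdges {s(u, v)}) k - tcoef (symmDiffContract G u v) k := by
  classical
  have h2n : 2 ≤ Fintype.card V := by
    have : ({u, v} : Finset V).card = 2 := Finset.card_pair he.ne
    calc 2 = ({u, v} : Finset V).card := this.symm
      _ ≤ Fintype.card V := Finset.card_le_univ _
  have hsub : Fintype.card {z : V // z ≠ u ∧ z ≠ v} = Fintype.card V - 2 := by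
    rw [Fintype.card_subtype]
    have : Finset.univ.filter (fun z : V => z ≠ u ∧ z ≠ v)
        = Finset.univ \ {u, v} := by
      ext z
      simp [not_or]
    rw [this, Finset.card_sdiff_of_subset (Finset.subset_univ _), Finset.card_univ,
      Finset.card_pair he.ne]
  have hcard : (Fintype.card (Option {z : V // z ≠ u ∧ z ≠ v}) : ℤ)
      = (Fintype.card V : ℤ) - 1 := by
    rw [Fintype.card_option, hsub]
    omega
  have hco : ∀ (W : Type _) [Fintype W] (H : SimpleGraph W),
      tcoef H k = (2 : ℚ) ^ ((k : ℤ) - (Fintype.card W : ℤ)) * (TK.gpoly H).coeff k := by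
    intro W _ H
    rw [tcoef, TK.gpoly_coeff]
  rw [hco V G, hco V (G.deleteEdges {s(u, v)}), hco _ (symmDiffContract G u v)]
  have hcoeff : (TK.gpoly G).coeff k
      = (TK.gpoly (G.deleteEdges {s(u, v)})).coeff k
        - 2 * (TK.gpoly (symmDiffContract G u v)).coeff k := by
    rw [TK.gpoly_rec he]
    simp [Polynomial.coeff_sub, Polynomial.coeff_C_mul]
  rw [hcoeff, hcard]
  have hexp : (k : ℤ) - ((Fintype.card V : ℤ) - 1) = ((k : ℤ) - (Fintype.card V : ℤ)) + 1 := by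
    ring
  rw [hexp, zpow_add₀ (two_ne_zero) _ 1, zpow_one]
  ring
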